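/- Suppose the polynomial $f(x_1,x_2,x_3) = v_0 x_1^6 + 6 v_1 x_1^5 x_2 + v_6(x_2^6 + 30 x_1 x_2^4 x_3 + 90 x_1^2 x_2^2 x_3^2 + 20 x_1^3 x_3^3) + 6 v_{11} x_2 x_3^5 + v_{12} x_3^6$ is nonnegative on $\mathbb{R}^3$ with $v_0, v_6, v_{12} \ge 0$. Then $|v_1| \le (v_0/5)^{5/6} v_6^{1/6}$, $|v_{11}| \le (v_{12}/5)^{5/6} v_6^{1/6}$, and $\sqrt{v_0 v_{12}} \ge 10 v_6$. -/

import Mathlib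

lemma key_aux (a b c : ℝ) (ha : 0 ≤ a) (hc : 0 ≤ c)
    (h : ∀ t : ℝ, 0 ≤ a + 6 * b * t + c * t ^ 6) :
    |b| ≤ (a / 5) ^ ((5 : ℝ) / 6) * c ^ ((1 : ℝ) / 6) := by
  have hB : ∀ t : ℝ, 0 ≤ t → 0 ≤ a - 6 * |b| * t + c * t ^ 6 := by
    intro t ht
    rcases abs_cases b with ⟨hb, _⟩ | ⟨hb, _⟩
    · have := h (-t)
      rw [hb]; nlinarith [this]
    · have := h t
      rw [hb]; nlinarith [this]
  rcases eq_or_lt_of_le (abs_nonneg b) with hb0 | hb0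
  · rw [← hb0]; positivity
  rcases eq_or_lt_of_le hc with hc0 | hc0
  · exfalso
    have := hB ((a + 1) / (6 * |b|)) (by positivity)
    rw [← hc0] at this
    have h6 : (6 : ℝ) * |b| > 0 := by positivity
    rw [mul_div_cancel₀ _ (ne_of_gt h6)] at this
    linarith
  · set B := |b| with hBdef
    have hBC : 0 < B / c := by positivity
    set t0 : ℝ := (B / c) ^ ((1 : ℝ) / 5) with ht0
    have ht0pos : 0 < t0 := Real.rpow_pos_of_pos hBC _
    have ht06 : c * t0 ^ 6 = B * t0 := by
      have h1 : t0 ^ 6 = (B / c) ^ ((6 : ℝ) / 5) := by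
        rw [ht0, ← Real.rpow_natCast ((B / c) ^ ((1:ℝ)/5)) 6, ← Real.rpow_mul hBC.le]
        norm_num
      rw [h1]
      have h2 : (B / c) ^ ((6 : ℝ) / 5) = (B / c) * (B / c) ^ ((1 : ℝ) / 5) := by
        rw [← Real.rpow_one_add' hBC.le (by norm_num : (1:ℝ) + 1/5 ≠ 0)]
        norm_num
      rw [h2, ← ht0]
      field_simp
    have hkey : B * t0 ≤ a / 5 := by
      have := hB t0 ht0pos.le
      rw [ht06] at this
      linarith
    have hdiv : t0 = B ^ ((1:ℝ)/5) / c ^ ((1:ℝ)/5) := by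
      rw [ht0, Real.div_rpow hb0.le hc0.le]
    have hc5 : 0 < c ^ ((1:ℝ)/5) := Real.rpow_pos_of_pos hc0 _
    have h65 : B ^ ((6:ℝ)/5) ≤ (a / 5) * c ^ ((1:ℝ)/5) := by
      have hBB : B * B ^ ((1:ℝ)/5) = B ^ ((6:ℝ)/5) := by
        nth_rewrite 1 [← Real.rpow_one B]
        rw [← Real.rpow_add hb0]; norm_num
      rw [hdiv, mul_div_assoc'] at hkey
      rw [← hBB]
      exact (div_le_iff₀ hc5).mp hkey
    have hfin := Real.rpow_le_rpow (Real.rpow_nonneg hb0.le _) h65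
      (by norm_num : (0:ℝ) ≤ 5/6)
    rw [← Real.rpow_mul hb0.le] at hfin
    norm_num at hfin
    rw [Real.mul_rpow (by positivity) hc5.le, ← Real.rpow_mul hc0.le] at hfin
    norm_num at hfin
    exact hfin

theorem stmt_8 (v0 v1 v6 v11 v12 : ℝ) (hv0 : 0 ≤ v0) (hv6 : 0 ≤ v6) (hv12 : 0 ≤ v12)
    (h : ∀ x1 x2 x3 : ℝ,
      0 ≤ v0 * x1 ^ 6 + 6 * v1 * x1 ^ 5 * x2 +
          v6 * (x2 ^ 6 + 30 * x1 * x2 ^ 4 * x3 + 90 * x1 ^ 2 * x2 ^ 2 * x3 ^ 2 +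
            20 * x1 ^ 3 * x3 ^ 3) + 6 * v11 * x2 * x3 ^ 5 + v12 * x3 ^ 6) :
    |v1| ≤ (v0 / 5) ^ ((5 : ℝ) / 6) * v6 ^ ((1 : ℝ) / 6) ∧
    |v11| ≤ (v12 / 5) ^ ((5 : ℝ) / 6) * v6 ^ ((1 : ℝ) / 6) ∧
    Real.sqrt (v0 * v12) ≥ 10 * v6 := by
  refine ⟨?_, ?_, ?_⟩
  · apply key_aux v0 v1 v6 hv0 hv6
    intro t
    have := h 1 t 0
    nlinarith [this]
  · apply key_aux v12 v11 v6 hv12 hv6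
    intro t
    have := h 0 t 1
    nlinarith [this]
  · -- third part
    have hquad : ∀ u w : ℝ, 0 ≤ u → 0 ≤ w →
        0 ≤ v0 * u ^ 2 - 20 * v6 * u * w + v12 * w ^ 2 := by
      intro u w hu hw
      have hx1 : (u ^ ((1:ℝ)/3)) ^ 3 = u := by
        rw [← Real.rpow_natCast (u ^ ((1:ℝ)/3)) 3, ← Real.rpow_mul hu]
        norm_num
      have hx3 : (w ^ ((1:ℝ)/3)) ^ 3 = w := by
        rw [← Real.rpow_natCast (w ^ ((1:ℝ)/3)) 3, ← Real.rpow_mul hw]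
        norm_num
      have := h (u ^ ((1:ℝ)/3)) 0 (-(w ^ ((1:ℝ)/3)))
      have e1 : (u ^ ((1:ℝ)/3)) ^ 6 = u ^ 2 := by
        rw [show (6:ℕ) = 3 * 2 by norm_num, pow_mul, hx1]
      have e3 : (-(w ^ ((1:ℝ)/3))) ^ 6 = w ^ 2 := by
        rw [Even.neg_pow (by decide), show (6:ℕ) = 3 * 2 by norm_num, pow_mul, hx3]
      have e2 : (-(w ^ ((1:ℝ)/3))) ^ 3 = -w := by
        rw [Odd.neg_pow (by decide), hx3]
      rw [e1, hx1, e2, e3] at this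
      nlinarith [this]
    rcases eq_or_lt_of_le hv6 with h6 | h6
    · rw [← h6]
      simpa using Real.sqrt_nonneg (v0 * v12)
    · have hv0' : 0 < v0 := by
        by_contra hcon
        push_neg at hcon
        have hv00 : v0 = 0 := le_antisymm hcon hv0
        set w0 : ℝ := v6 / (v12 + 1) with hw0def
        have hw0 : 0 < w0 := by positivity
        have := hquad 1 w0 (by norm_num) hw0.le
        rw [hv00] at this
        have hmulw : v12 * w0 ^ 2 + w0 ^ 2 = v6 * w0 := by
          rw [hw0def]
          have : v12 + 1 ≠ 0 := by positivity
          field_simp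
        nlinarith [this, hmulw, mul_pos h6 hw0, sq_nonneg w0]
      have hv12' : 0 < v12 := by
        by_contra hcon
        push_neg at hcon
        have hv120 : v12 = 0 := le_antisymm hcon hv12
        set u0 : ℝ := v6 / (v0 + 1) with hu0def
        have hu0 : 0 < u0 := by positivity
        have := hquad u0 1 hu0.le (by norm_num)
        rw [hv120] at this
        have hmulu : v0 * u0 ^ 2 + u0 ^ 2 = v6 * u0 := by
          rw [hu0def]
          have : v0 + 1 ≠ 0 := by positivity
          field_simp
        nlinarith [this, hmulu, mul_pos h6 hu0, sq_nonneg u0]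
      have hs : 0 < Real.sqrt (v0 * v12) := Real.sqrt_pos.mpr (by positivity)
      have hsq : Real.sqrt (v0 * v12) ^ 2 = v0 * v12 := Real.sq_sqrt (by positivity)
      have := hquad (Real.sqrt v12) (Real.sqrt v0) (Real.sqrt_nonneg _) (Real.sqrt_nonneg _)
      have e12 : Real.sqrt v12 ^ 2 = v12 := Real.sq_sqrt hv12
      have e0 : Real.sqrt v0 ^ 2 = v0 := Real.sq_sqrt hv0
      have emul : Real.sqrt v12 * Real.sqrt v0 = Real.sqrt (v0 * v12) := by
        rw [← Real.sqrt_mul hv12 v0, mul_comm]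
      rw [e12, e0] at this
      nlinarith [this, emul, hsq, hs]
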